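/- Fix μ > 0. For any finite family of bounded intervals {I_α}_{α∈A} on ℝ and any scalars {t_α}_{α∈A} ⊂ ℝ satisfying |t_α| < μ·|I_α| for all α, there are constants c(μ), C(μ) > 0 depending only on μ such that c(μ)·|⋃_α I_α| ≤ |⋃_α (t_α + I_α)| ≤ C(μ)·|⋃_α I_α|. In particular one may take c(μ) = 1/(3·3·(1+μ)). -/

import Mathlib

open MeasureTheory

set_option maxHeartbeats 1000000 in
open Metric in
lemma vitali_key {ι : Type} (A : Finset ι) (x y r : ι → ℝ) (hr : ∀ α ∈ A, 0 ≤ r α)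
    (ρ : ℝ) (hρ : 0 ≤ ρ)
    (hxy : ∀ α ∈ A, closedBall (y α) (r α) ⊆ closedBall (x α) (ρ * r α)) :
    volume (⋃ α ∈ A, closedBall (y α) (r α)) ≤
      ENNReal.ofReal (2 * ρ + 3) * volume (⋃ α ∈ A, closedBall (x α) (r α)) := by
  obtain ⟨u, huA, hdisj, hcov⟩ :=
    Vitali.exists_disjoint_subfamily_covering_enlargement
      (fun α => closedBall (x α) (r α)) (↑A) r 2 one_lt_two
      (fun a ha => hr a ha) (∑ α ∈ A, r α)
      (fun a ha => Finset.single_le_sum (fun i hi => hr i hi) ha)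
      (fun a ha => (nonempty_closedBall.2 (hr a ha)))
  have hufin : u.Finite := A.finite_toSet.subset huA
  have hsub : (⋃ α ∈ A, closedBall (y α) (r α)) ⊆
      ⋃ b ∈ hufin.toFinset, closedBall (x b) ((2 * ρ + 3) * r b) := by
    intro w hw
    simp only [Set.mem_iUnion] at hw ⊢
    obtain ⟨α, hα, hwα⟩ := hw
    obtain ⟨b, hb, hne, hrab⟩ := hcov α hα
    refine ⟨b, hufin.mem_toFinset.2 hb, ?_⟩
    obtain ⟨z, hz1, hz2⟩ := hne
    have hbA : b ∈ A := huA hb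
    have hrb : 0 ≤ r b := hr b hbA
    have h1 : dist z (x α) ≤ r α := mem_closedBall.1 hz1
    have h2 : dist z (x b) ≤ r b := mem_closedBall.1 hz2
    have hxab : dist (x α) (x b) ≤ 3 * r b := by
      have := dist_triangle (x α) z (x b)
      rw [dist_comm (x α) z] at this
      linarith
    have hwx : dist w (x α) ≤ ρ * r α := hxy α hα hwα
    have htri : dist w (x b) ≤ ρ * r α + 3 * r b :=
      le_trans (dist_triangle w (x α) (x b)) (by linarith)
    exact mem_closedBall.2 (by nlinarith)
  calc volume (⋃ α ∈ A, closedBall (y α) (r α))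
      ≤ volume (⋃ b ∈ hufin.toFinset, closedBall (x b) ((2 * ρ + 3) * r b)) :=
        measure_mono hsub
    _ ≤ ∑ b ∈ hufin.toFinset, volume (closedBall (x b) ((2 * ρ + 3) * r b)) :=
        measure_biUnion_finset_le _ _
    _ = ∑ b ∈ hufin.toFinset, ENNReal.ofReal (2 * ρ + 3) * volume (closedBall (x b) (r b)) := by
        refine Finset.sum_congr rfl fun b hb => ?_
        rw [Real.volume_closedBall, Real.volume_closedBall,
          ← ENNReal.ofReal_mul (by linarith : (0:ℝ) ≤ 2 * ρ + 3)]
        congr 1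
        ring
    _ = ENNReal.ofReal (2 * ρ + 3) * ∑ b ∈ hufin.toFinset, volume (closedBall (x b) (r b)) := by
        rw [Finset.mul_sum]
    _ = ENNReal.ofReal (2 * ρ + 3) * volume (⋃ b ∈ hufin.toFinset, closedBall (x b) (r b)) := by
        rw [measure_biUnion_finset
          (fun p hp q hq hpq => hdisj (hufin.mem_toFinset.1 hp) (hufin.mem_toFinset.1 hq) hpq)
          (fun b _ => measurableSet_closedBall)]
    _ ≤ ENNReal.ofReal (2 * ρ + 3) * volume (⋃ α ∈ A, closedBall (x α) (r α)) := by
        refine mul_le_mul_right (measure_mono ?_) _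
        intro w hw
        simp only [Set.mem_iUnion] at hw ⊢
        obtain ⟨c, hc, hwc⟩ := hw
        exact ⟨c, huA (hufin.mem_toFinset.1 hc), hwc⟩

/-- Union of translated intervals is comparable to the union of the original intervals,
with constants depending only on `μ`, provided each translation satisfies `|t_α| < μ|I_α|`.
In particular one may take the lower constant `c(μ) = 1/(3⋅3⋅(1+μ))`. -/
theorem stmt_3 (μ : ℝ) (hμ : 0 < μ) :
    ∃ C : ℝ, 0 < C ∧
      ∀ (ι : Type) (A : Finset ι) (a b t : ι → ℝ),
        (∀ α ∈ A, a α ≤ b α) →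
        (∀ α ∈ A, |t α| < μ * (b α - a α)) →
        ENNReal.ofReal (1 / (3 * 3 * (1 + μ))) * volume (⋃ α ∈ A, Set.Icc (a α) (b α)) ≤
            volume (⋃ α ∈ A, Set.Icc (t α + a α) (t α + b α)) ∧
          volume (⋃ α ∈ A, Set.Icc (t α + a α) (t α + b α)) ≤
            ENNReal.ofReal C * volume (⋃ α ∈ A, Set.Icc (a α) (b α)) := by
  refine ⟨4 * μ + 5, by linarith, fun ι A a b t hab ht => ?_⟩
  set x : ι → ℝ := fun α => (a α + b α) / 2 with hx
  set y : ι → ℝ := fun α => t α + (a α + b α) / 2 with hy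
  set r : ι → ℝ := fun α => (b α - a α) / 2 with hrdef
  have hr : ∀ α ∈ A, 0 ≤ r α := fun α hα => by
    have := hab α hα; simp only [hrdef]; linarith
  have hEq1 : (⋃ α ∈ A, Set.Icc (a α) (b α)) = ⋃ α ∈ A, Metric.closedBall (x α) (r α) := by
    refine Set.iUnion₂_congr fun α hα => ?_
    rw [Real.closedBall_eq_Icc]
    congr 1 <;> simp only [hx, hrdef] <;> ring
  have hEq2 : (⋃ α ∈ A, Set.Icc (t α + a α) (t α + b α)) =
      ⋃ α ∈ A, Metric.closedBall (y α) (r α) := by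
    refine Set.iUnion₂_congr fun α hα => ?_
    rw [Real.closedBall_eq_Icc]
    congr 1 <;> simp only [hy, hrdef] <;> ring
  have hρ : (0:ℝ) ≤ 1 + 2 * μ := by linarith
  have hdistxy : ∀ α ∈ A, dist (x α) (y α) ≤ 2 * μ * r α := fun α hα => by
    have h := ht α hα
    have : dist (x α) (y α) = |t α| := by
      rw [Real.dist_eq, show x α - y α = -(t α) by simp only [hx, hy]; ring, abs_neg]
    rw [this]
    simp only [hrdef]
    linarith
  have hxy1 : ∀ α ∈ A,
      Metric.closedBall (y α) (r α) ⊆ Metric.closedBall (x α) ((1 + 2 * μ) * r α) := by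
    intro α hα w hw
    have h1 : dist w (y α) ≤ r α := Metric.mem_closedBall.1 hw
    have h2 := hdistxy α hα
    refine Metric.mem_closedBall.2 (le_trans (dist_triangle w (y α) (x α)) ?_)
    rw [dist_comm (y α) (x α)]
    linarith
  have hxy2 : ∀ α ∈ A,
      Metric.closedBall (x α) (r α) ⊆ Metric.closedBall (y α) ((1 + 2 * μ) * r α) := by
    intro α hα w hw
    have h1 : dist w (x α) ≤ r α := Metric.mem_closedBall.1 hw
    have h2 := hdistxy α hα
    refine Metric.mem_closedBall.2 (le_trans (dist_triangle w (x α) (y α)) ?_)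
    linarith
  have key1 := vitali_key A x y r hr (1 + 2 * μ) hρ hxy1
  have key2 := vitali_key A y x r hr (1 + 2 * μ) hρ hxy2
  have hconst : 2 * (1 + 2 * μ) + 3 = 4 * μ + 5 := by ring
  rw [hconst] at key1 key2
  rw [hEq1, hEq2]
  constructor
  · -- lower bound
    have h9 : volume (⋃ α ∈ A, Metric.closedBall (x α) (r α)) ≤
        ENNReal.ofReal (3 * 3 * (1 + μ)) * volume (⋃ α ∈ A, Metric.closedBall (y α) (r α)) :=
      le_trans key2 (mul_le_mul_left (ENNReal.ofReal_le_ofReal (by linarith)) _)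
    calc ENNReal.ofReal (1 / (3 * 3 * (1 + μ))) * volume (⋃ α ∈ A, Metric.closedBall (x α) (r α))
        ≤ ENNReal.ofReal (1 / (3 * 3 * (1 + μ))) *
          (ENNReal.ofReal (3 * 3 * (1 + μ)) * volume (⋃ α ∈ A, Metric.closedBall (y α) (r α))) := by
          gcongr
      _ = (ENNReal.ofReal (1 / (3 * 3 * (1 + μ))) * ENNReal.ofReal (3 * 3 * (1 + μ))) *
          volume (⋃ α ∈ A, Metric.closedBall (y α) (r α)) := by ring
      _ = volume (⋃ α ∈ A, Metric.closedBall (y α) (r α)) := by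
          rw [← ENNReal.ofReal_mul (by positivity)]
          rw [one_div, inv_mul_cancel₀ (by positivity), ENNReal.ofReal_one, one_mul]
  · exact key1
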